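/- Let n ≥ 1. Then 4/(X_{n-1} − 2) ∈ ℤ[X_{n-1}], and the periodic continued fraction [2, 4/(X_{n-1}−2), 4, 4/(X_{n-1}−2), 4, …] (i.e. the sequence c with c₀ = 2, c_{2k+1} = 4/(X_{n-1} − 2), and c_{2k+2} = 4 for all k ≥ 0) converges to X_n. -/

import Mathlib

/-- `X n = 2 cos(2π/2^(n+2))`. -/
noncomputable def X (n : ℕ) : ℝ := 2 * Real.cos (2 * Real.pi / 2 ^ (n + 2))

/-- Convergent numerators: `cfNum c (k+1) = p_k`, with `cfNum c 0 = p_{-1} = 1`. -/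
noncomputable def cfNum (c : ℕ → ℝ) : ℕ → ℝ
  | 0 => 1
  | 1 => c 0
  | (k + 2) => c (k + 1) * cfNum c (k + 1) + cfNum c k

/-- Convergent denominators: `cfDen c (k+1) = q_k`, with `cfDen c 0 = q_{-1} = 0`. -/
noncomputable def cfDen (c : ℕ → ℝ) : ℕ → ℝ
  | 0 => 0
  | 1 => 1
  | (k + 2) => c (k + 1) * cfDen c (k + 1) + cfDen c k

/-- The continued fraction `[c₀, c₁, c₂, …]` converges to `x`. -/
def CFConv (c : ℕ → ℝ) (x : ℝ) : Prop :=
  Filter.Tendsto (fun k => cfNum c (k + 1) / cfDen c (k + 1)) Filter.atTop (nhds x)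

lemma X_zero : X 0 = 0 := by
  have : 2 * Real.pi / 2 ^ (0 + 2) = Real.pi / 2 := by ring
  simp [X, this, Real.cos_pi_div_two]

lemma X_sq (m : ℕ) : X (m + 1) ^ 2 = 2 + X m := by
  have h := Real.cos_sq (2 * Real.pi / 2 ^ (m + 1 + 2))
  have h2 : 2 * (2 * Real.pi / 2 ^ (m + 1 + 2)) = 2 * Real.pi / 2 ^ (m + 2) := by
    rw [pow_succ]; ring
  rw [h2] at h
  unfold X
  nlinarith [h]

lemma X_bounds (n : ℕ) (hn : 1 ≤ n) : 0 < X n ∧ X n < 2 := by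
  have hpi := Real.pi_pos
  set t := 2 * Real.pi / 2 ^ (n + 2) with ht
  have h2 : (8 : ℝ) ≤ 2 ^ (n + 2) := by
    calc (8:ℝ) = 2 ^ 3 := by norm_num
    _ ≤ 2 ^ (n + 2) := by
      apply pow_le_pow_right₀ (by norm_num)
      omega
  have hp : (0:ℝ) < 2 ^ (n + 2) := by positivity
  have ht0 : 0 < t := by positivity
  have htl : t ≤ Real.pi / 4 := by
    rw [ht, div_le_div_iff₀ hp (by norm_num)]
    nlinarith
  constructor
  · have : 0 < Real.cos t := Real.cos_pos_of_mem_Ioo ⟨by linarith, by linarith⟩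
    unfold X; linarith
  · have : Real.cos t < Real.cos 0 :=
      Real.cos_lt_cos_of_nonneg_of_le_pi le_rfl (by linarith) ht0
    rw [Real.cos_zero] at this
    unfold X; linarith

lemma adjoin_aux : ∀ m, ∃ r ∈ Algebra.adjoin ℤ ({X m} : Set ℝ), (2 - X m) * r = 2 := by
  intro m
  induction m with
  | zero => exact ⟨1, Subalgebra.one_mem _, by rw [X_zero]; ring⟩
  | succ m ih =>
    obtain ⟨r, hr, hr2⟩ := ih
    have hle : Algebra.adjoin ℤ ({X m} : Set ℝ) ≤ Algebra.adjoin ℤ ({X (m+1)} : Set ℝ) := by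
      apply Algebra.adjoin_le
      rw [Set.singleton_subset_iff]
      have : X m = X (m+1) * X (m+1) - 2 := by have := X_sq m; nlinarith
      rw [this]
      exact Subalgebra.sub_mem _ (Subalgebra.mul_mem _
        (Algebra.self_mem_adjoin_singleton ℤ _) (Algebra.self_mem_adjoin_singleton ℤ _))
        (by exact_mod_cast Subalgebra.natCast_mem _ 2)
    refine ⟨(2 + X (m+1)) * r, ?_, ?_⟩
    · exact Subalgebra.mul_mem _ (Subalgebra.add_mem _ (by exact_mod_cast Subalgebra.natCast_mem _ 2)
        (Algebra.self_mem_adjoin_singleton ℤ _)) (hle hr)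
    · have := X_sq m
      linear_combination hr2 - r * this

set_option maxHeartbeats 2000000 in
lemma key (x : ℝ) (hx0 : 0 < x) (hx2 : x < 2) (c : ℕ → ℝ) (hc0 : c 0 = 2)
    (hcodd : ∀ k, c (2 * k + 1) = 4 / (x ^ 2 - 4)) (hceven : ∀ k, c (2 * k + 2) = 4) :
    Filter.Tendsto (fun k => cfNum c (k + 1) / cfDen c (k + 1)) Filter.atTop (nhds x) := by
  have hxm : x - 2 ≠ 0 := by linarith
  have hp2 : (0:ℝ) < x + 2 := by linarith
  have hxp : x + 2 ≠ 0 := ne_of_gt hp2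
  have hx4 : x ^ 2 - 4 ≠ 0 := by intro h; apply hxm; nlinarith
  have hxne : x ≠ 0 := ne_of_gt hx0
  set u : ℝ := 4 / (x ^ 2 - 4) with hudef
  set r : ℝ := (x - 2) / (x + 2) with hrdef
  set s : ℝ := (x + 2) / (x - 2) with hsdef
  have hv : (x ^ 2 - 4) * u = 4 := by rw [hudef]; field_simp
  have hsr : (x - 2) * s = x + 2 := by rw [hsdef]; field_simp
  have hrr : (x + 2) * r = x - 2 := by rw [hrdef]; field_simp
  have hrs : r * s = 1 := by rw [hrdef, hsdef]; field_simp
  have hrneg : -1 < r ∧ r < 1 := by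
    constructor
    · rw [hrdef, lt_div_iff₀ hp2]; linarith
    · rw [hrdef, div_lt_one hp2]; linarith
  have hr1 : |r| < 1 := abs_lt.mpr hrneg
  clear_value u r s
  -- closed forms (multiplied through by denominators)
  have H : ∀ m : ℕ,
      2 * cfNum c (2 * m + 1) = (2 + x) * s ^ m + (2 - x) * r ^ m ∧
      2 * x * cfDen c (2 * m + 1) = (2 + x) * s ^ m - (2 - x) * r ^ m ∧
      2 * cfNum c (2 * m + 2) = s ^ (m + 1) + r ^ (m + 1) ∧
      2 * x * cfDen c (2 * m + 2) = s ^ (m + 1) - r ^ (m + 1) := by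
    intro m
    induction m with
    | zero =>
      have h1 : c 1 = u := hcodd 0
      refine ⟨?_, ?_, ?_, ?_⟩
      · show 2 * c 0 = _; rw [hc0]; ring
      · show 2 * x * (1:ℝ) = _; ring
      · show 2 * (c 1 * c 0 + 1) = _
        rw [h1, hc0]
        simp only [pow_one, zero_add]
        linear_combination ((s + r - 2)/4) * hv - ((x+2)*u/4) * hsr - ((x-2)*u/4) * hrr
      · show 2 * x * (c 1 * 1 + 0) = _
        rw [h1]
        simp only [pow_one, zero_add]
        linear_combination ((s - r)/4) * hv - ((x+2)*u/4) * hsr + ((x-2)*u/4) * hrr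
    | succ m ih =>
      obtain ⟨ih1, ih2, ih3, ih4⟩ := ih
      have ha : c (2 * (m + 1) + 1) = u := hcodd (m + 1)
      have he : c (2 * m + 2) = 4 := hceven m
      have e1 : cfNum c (2 * (m + 1) + 1) = c (2 * m + 2) * cfNum c (2 * m + 2) + cfNum c (2 * m + 1) := by
        show cfNum c (2 * m + 1 + 2) = _; rfl
      have e2 : cfDen c (2 * (m + 1) + 1) = c (2 * m + 2) * cfDen c (2 * m + 2) + cfDen c (2 * m + 1) := by
        show cfDen c (2 * m + 1 + 2) = _; rfl
      have e3 : cfNum c (2 * (m + 1) + 2) = c (2 * (m + 1) + 1) * cfNum c (2 * (m + 1) + 1) + cfNum c (2 * m + 2) := by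
        show cfNum c (2 * m + 2 + 2) = _
        have h : 2 * (m + 1) + 1 = 2 * m + 2 + 1 := by ring
        rw [h]; rfl
      have e4 : cfDen c (2 * (m + 1) + 2) = c (2 * (m + 1) + 1) * cfDen c (2 * (m + 1) + 1) + cfDen c (2 * m + 2) := by
        show cfDen c (2 * m + 2 + 2) = _
        have h : 2 * (m + 1) + 1 = 2 * m + 2 + 1 := by ring
        rw [h]; rfl
      have g1 : 2 * cfNum c (2 * (m + 1) + 1) = (2 + x) * s ^ (m + 1) + (2 - x) * r ^ (m + 1) := by
        rw [e1, he, pow_succ, pow_succ]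
        linear_combination 4 * ih3 + ih1 - s ^ m * hsr + r ^ m * hrr
      have g2 : 2 * x * cfDen c (2 * (m + 1) + 1) = (2 + x) * s ^ (m + 1) - (2 - x) * r ^ (m + 1) := by
        rw [e2, he, pow_succ, pow_succ]
        linear_combination 4 * ih4 + ih2 - s ^ m * hsr - r ^ m * hrr
      refine ⟨g1, g2, ?_, ?_⟩
      · rw [e3, ha]
        linear_combination u * g1 + ih3 + (s^(m+1)*(s-1)/4 + r^(m+1)*(r-1)/4) * hv
          - (s^(m+1)*(x+2)*u/4) * hsr - (r^(m+1)*(x-2)*u/4) * hrr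
      · rw [e4, ha]
        linear_combination u * g2 + ih4 + (s^(m+1)*(s-1)/4 - r^(m+1)*(r-1)/4) * hv
          - (s^(m+1)*(x+2)*u/4) * hsr + (r^(m+1)*(x-2)*u/4) * hrr
  have hr1 : |r| < 1 := abs_lt.mpr hrneg
  have hr2lt : r ^ 2 < 1 := by nlinarith
  have hr2nn : (0:ℝ) ≤ r ^ 2 := sq_nonneg r
  have hs1 : 1 < |s| := by
    have h0 : |r| * |s| = 1 := by rw [← abs_mul, hrs, abs_one]
    have hsne : |s| ≠ 0 := by intro h; rw [h, mul_zero] at h0; norm_num at h0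
    have hspos : 0 < |s| := lt_of_le_of_ne (abs_nonneg s) (Ne.symm hsne)
    nlinarith
  set g : ℕ → ℝ := fun k => if k % 2 = 0 then ((2 - x) / (2 + x)) * (r ^ 2) ^ (k / 2)
      else (r ^ 2) ^ (k / 2 + 1) with hgdef
  have hcoef : 0 < (2 - x) / (2 + x) ∧ (2 - x) / (2 + x) < 1 := by
    constructor
    · exact div_pos (by linarith) (by linarith)
    · rw [div_lt_one (by linarith)]; linarith
  have hpowle : ∀ m : ℕ, (r ^ 2) ^ m ≤ 1 := fun m => pow_le_one₀ hr2nn hr2lt.le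
  have hgband : ∀ k, |g k| ≤ (r ^ 2) ^ (k / 2) ∧ |g k| < 1 := by
    intro k
    rcases Nat.even_or_odd k with ⟨m, hm⟩ | ⟨m, hm⟩
    · have hk2 : k % 2 = 0 := by omega
      have hkd : k / 2 = m := by omega
      have hgk : g k = ((2 - x) / (2 + x)) * (r ^ 2) ^ m := by
        simp [hgdef, hk2, hkd]
      rw [hgk, hkd]
      have h1 : |((2 - x) / (2 + x)) * (r ^ 2) ^ m| = ((2 - x) / (2 + x)) * (r ^ 2) ^ m := by
        rw [abs_of_nonneg]
        exact mul_nonneg hcoef.1.le (pow_nonneg hr2nn m)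
      rw [h1]
      constructor
      · nlinarith [pow_nonneg hr2nn m, hcoef.1, hcoef.2]
      · nlinarith [pow_nonneg hr2nn m, hcoef.1, hcoef.2, hpowle m]
    · have hk2 : ¬ (k % 2 = 0) := by omega
      have hkd : k / 2 = m := by omega
      have hgk : g k = (r ^ 2) ^ (m + 1) := by
        simp [hgdef, hk2, hkd]
      rw [hgk, hkd]
      have h1 : |(r ^ 2) ^ (m + 1)| = (r ^ 2) ^ (m + 1) := by
        rw [abs_of_nonneg]; positivity
      rw [h1]
      constructor
      · rw [pow_succ]
        nlinarith [pow_nonneg hr2nn m, hpowle m]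
      · exact pow_lt_one₀ hr2nn hr2lt (Nat.succ_ne_zero m)
  have hg0 : Filter.Tendsto g Filter.atTop (nhds 0) := by
    have h2 : Filter.Tendsto (fun k : ℕ => k / 2) Filter.atTop Filter.atTop :=
      Filter.tendsto_atTop_atTop.mpr fun b => ⟨2 * b, fun a ha => by omega⟩
    have h1 : Filter.Tendsto (fun m : ℕ => (r ^ 2) ^ m) Filter.atTop (nhds 0) :=
      tendsto_pow_atTop_nhds_zero_of_lt_one hr2nn hr2lt
    exact squeeze_zero_norm (fun k => (hgband k).1) (h1.comp h2)
  have hratio : ∀ k, cfNum c (k + 1) / cfDen c (k + 1) = x * (1 + g k) / (1 - g k) := by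
    intro k
    have h1g : 1 - g k ≠ 0 := by
      have h2 := (hgband k).2
      intro h
      have hgk1 : g k = 1 := by linarith
      rw [hgk1] at h2
      norm_num at h2
    rcases Nat.even_or_odd k with ⟨m, hm⟩ | ⟨m, hm⟩
    · have hk2 : k % 2 = 0 := by omega
      have hkd : k / 2 = m := by omega
      have hgk : g k = ((2 - x) / (2 + x)) * (r ^ 2) ^ m := by
        simp [hgdef, hk2, hkd]
      obtain ⟨hN, hD, -, -⟩ := H m
      have hkm : k + 1 = 2 * m + 1 := by omega
      have hW : (r ^ 2) ^ m * s ^ m = r ^ m := by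
        rw [← mul_pow]
        congr 1
        linear_combination r * hrs
      have hgx : g k * ((2 + x) * s ^ m) = (2 - x) * r ^ m := by
        rw [hgk, ← hW]
        field_simp
      have hQ : (2 + x) * s ^ m - (2 - x) * r ^ m ≠ 0 := by
        have hb1 : |(2 - x) * r ^ m| < |(2 + x) * s ^ m| := by
          rw [abs_mul, abs_mul, abs_pow, abs_pow]
          have l1 : |r| ^ m ≤ 1 := pow_le_one₀ (abs_nonneg r) hr1.le
          have l2 : 1 ≤ |s| ^ m := one_le_pow₀ hs1.le
          have l3 : |(2:ℝ) - x| = 2 - x := abs_of_pos (by linarith)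
          have l4 : |(2:ℝ) + x| = 2 + x := abs_of_pos (by linarith)
          rw [l3, l4]
          nlinarith [pow_nonneg (abs_nonneg r) m, pow_nonneg (abs_nonneg s) m]
        intro h
        rw [sub_eq_zero] at h
        rw [h] at hb1
        exact lt_irrefl _ hb1
      have hNval : cfNum c (k + 1) = ((2 + x) * s ^ m + (2 - x) * r ^ m) / 2 := by
        rw [hkm]; linarith
      have hDval : cfDen c (k + 1) = ((2 + x) * s ^ m - (2 - x) * r ^ m) / (2 * x) := by
        rw [hkm, eq_div_iff (by positivity)]; linarith
      rw [hNval, hDval]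
      have hL : (((2 + x) * s ^ m + (2 - x) * r ^ m) / 2) /
          (((2 + x) * s ^ m - (2 - x) * r ^ m) / (2 * x)) =
          x * ((2 + x) * s ^ m + (2 - x) * r ^ m) / ((2 + x) * s ^ m - (2 - x) * r ^ m) := by
        field_simp
      rw [hL, div_eq_div_iff hQ h1g]
      linear_combination (-2 * x) * hgx
    · have hk2 : ¬ (k % 2 = 0) := by omega
      have hkd : k / 2 = m := by omega
      have hgk : g k = (r ^ 2) ^ (m + 1) := by
        simp [hgdef, hk2, hkd]
      obtain ⟨-, -, hN, hD⟩ := H m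
      have hkm : k + 1 = 2 * m + 2 := by omega
      have hW : (r ^ 2) ^ (m + 1) * s ^ (m + 1) = r ^ (m + 1) := by
        rw [← mul_pow]
        congr 1
        linear_combination r * hrs
      have hgx : g k * s ^ (m + 1) = r ^ (m + 1) := by rw [hgk]; exact hW
      have hQ : s ^ (m + 1) - r ^ (m + 1) ≠ 0 := by
        have hb1 : |r ^ (m + 1)| < |s ^ (m + 1)| := by
          rw [abs_pow, abs_pow]
          have l1 : |r| ^ (m + 1) < 1 := pow_lt_one₀ (abs_nonneg r) hr1 (Nat.succ_ne_zero m)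
          have l2 : 1 ≤ |s| ^ (m + 1) := one_le_pow₀ hs1.le
          linarith
        intro h
        rw [sub_eq_zero] at h
        rw [h] at hb1
        exact lt_irrefl _ hb1
      have hNval : cfNum c (k + 1) = (s ^ (m + 1) + r ^ (m + 1)) / 2 := by
        rw [hkm]; linarith
      have hDval : cfDen c (k + 1) = (s ^ (m + 1) - r ^ (m + 1)) / (2 * x) := by
        rw [hkm, eq_div_iff (by positivity)]; linarith
      rw [hNval, hDval]
      have hL : ((s ^ (m + 1) + r ^ (m + 1)) / 2) / ((s ^ (m + 1) - r ^ (m + 1)) / (2 * x)) =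
          x * (s ^ (m + 1) + r ^ (m + 1)) / (s ^ (m + 1) - r ^ (m + 1)) := by
        field_simp
      rw [hL, div_eq_div_iff hQ h1g]
      linear_combination (-2 * x) * hgx
  have hfin : Filter.Tendsto (fun k => x * (1 + g k) / (1 - g k)) Filter.atTop (nhds x) := by
    have h := (Filter.Tendsto.mul (tendsto_const_nhds (x := x))
        (Filter.Tendsto.add (tendsto_const_nhds (x := (1:ℝ))) hg0)).div
        (Filter.Tendsto.sub (tendsto_const_nhds (x := (1:ℝ))) hg0) (by norm_num)
    simpa [Pi.div_def] using h
  exact hfin.congr fun k => (hratio k).symm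

theorem stmt13 (n : ℕ) (hn : 1 ≤ n)
    (c : ℕ → ℝ) (hc0 : c 0 = 2)
    (hcodd : ∀ k, c (2 * k + 1) = 4 / (X (n - 1) - 2))
    (hceven : ∀ k, c (2 * k + 2) = 4) :
    4 / (X (n - 1) - 2) ∈ Algebra.adjoin ℤ ({X (n - 1)} : Set ℝ) ∧
      CFConv c (X n) := by
  obtain ⟨m, rfl⟩ : ∃ m, n = m + 1 := ⟨n - 1, by omega⟩
  have hm1 : m + 1 - 1 = m := rfl
  rw [hm1] at hcodd ⊢
  have hsq := X_sq m
  have hb := X_bounds (m + 1) (by omega)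
  have hylt : X m < 2 := by nlinarith [hb.1, hb.2]
  have hyne : X m - 2 ≠ 0 := by intro h; nlinarith
  constructor
  · obtain ⟨r, hr, hr2⟩ := adjoin_aux m
    have hval : 4 / (X m - 2) = -2 * r := by
      rw [div_eq_iff hyne]
      linear_combination (-2 : ℝ) * hr2
    rw [hval]
    exact Subalgebra.mul_mem _ (Subalgebra.neg_mem _ (by exact_mod_cast Subalgebra.natCast_mem _ 2)) hr
  · have hcodd' : ∀ k, c (2 * k + 1) = 4 / (X (m + 1) ^ 2 - 4) := by
      intro k
      rw [hcodd k]
      congr 1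
      linarith [hsq]
    exact key (X (m + 1)) hb.1 hb.2 c hc0 hcodd' hceven
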